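/- With g(2, z; r, s) = (z^r + 1)·ln_r z − (z^s + 1)·ln_s z, for every z ∈ (1, ∞) and every 1/2 ≤ r < s < ∞, we have g(2, z; r, s) < 0. -/

import Mathlib

/-- The `q`-logarithm (Tsallis logarithm): `ln_q x = (x^(1-q) - 1)/(1-q)` for `q ≠ 1`,
and `ln_1 x = ln x`. -/
noncomputable def qlog (q x : ℝ) : ℝ :=
  if q = 1 then Real.log x else (x ^ (1 - q) - 1) / (1 - q)

theorem stmt_7 (z r s : ℝ) (hz : 1 < z) (hr : 1 / 2 ≤ r) (hrs : r < s) :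
    (z ^ r + 1) * qlog r z - (z ^ s + 1) * qlog s z < 0 := by
  have hz0 : (0:ℝ) < z := lt_trans one_pos hz
  have hlz : 0 < Real.log z := Real.log_pos hz
  set Φ : ℝ → ℝ := fun t => z ^ t - z ^ (1 - t) with hΦdef
  -- derivative of Φ
  have hB : ∀ t : ℝ, HasDerivAt Φ (Real.log z * (z ^ t + z ^ (1 - t))) t := by
    intro t
    have h1 : HasDerivAt (fun u : ℝ => z ^ u) (z ^ t * Real.log z) t :=
      (Real.hasStrictDerivAt_const_rpow hz0 t).hasDerivAt
    have h2 : HasDerivAt (fun u : ℝ => z ^ (1 - u)) (z ^ (1 - t) * Real.log z * (-1)) t := by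
      have hg : HasDerivAt (fun u : ℝ => 1 - u) (-1) t := (hasDerivAt_id t).const_sub 1
      have := ((Real.hasStrictDerivAt_const_rpow hz0 (1 - t)).hasDerivAt).comp t hg
      simpa [Function.comp_def] using this
    have : HasDerivAt Φ (z ^ t * Real.log z - z ^ (1 - t) * Real.log z * (-1)) t := h1.sub h2
    convert this using 1
    ring
  have hΦconv : StrictConvexOn ℝ (Set.Ici (1/2:ℝ)) Φ := by
    have hd : deriv Φ = fun t => Real.log z * (z ^ t + z ^ (1 - t)) :=
      funext fun t => (hB t).deriv
    refine strictConvexOn_of_deriv2_pos (convex_Ici _)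
      (fun t _ => (hB t).differentiableAt.continuousAt.continuousWithinAt) ?_
    intro x hx
    rw [interior_Ici] at hx
    have hB2 : HasDerivAt (deriv Φ)
        (Real.log z * (z ^ x * Real.log z + z ^ (1 - x) * Real.log z * (-1))) x := by
      rw [hd]
      have h1 : HasDerivAt (fun u : ℝ => z ^ u) (z ^ x * Real.log z) x :=
        (Real.hasStrictDerivAt_const_rpow hz0 x).hasDerivAt
      have h2 : HasDerivAt (fun u : ℝ => z ^ (1 - u)) (z ^ (1 - x) * Real.log z * (-1)) x := by
        have hg : HasDerivAt (fun u : ℝ => 1 - u) (-1) x := (hasDerivAt_id x).const_sub 1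
        have := ((Real.hasStrictDerivAt_const_rpow hz0 (1 - x)).hasDerivAt).comp x hg
        simpa [Function.comp_def] using this
      exact (h1.add h2).const_mul _
    have hlt : z ^ (1 - x) < z ^ x := by
      rw [Real.rpow_lt_rpow_left_iff hz]
      have := Set.mem_Ioi.mp hx
      linarith
    have : (deriv^[2] Φ) x = Real.log z * (z ^ x * Real.log z + z ^ (1 - x) * Real.log z * (-1)) := by
      simp only [Function.iterate_succ, Function.iterate_zero, Function.comp_apply, id_eq]
      exact hB2.deriv
    rw [this]
    have : Real.log z * (z ^ x * Real.log z + z ^ (1 - x) * Real.log z * (-1))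
        = Real.log z ^ 2 * (z ^ x - z ^ (1 - x)) := by ring
    rw [this]
    exact mul_pos (pow_pos hlz 2) (sub_pos.mpr hlt)
  -- value of f as a slope
  have key : ∀ t : ℝ, t ≠ 1 → (z ^ t + 1) * qlog t z = (Φ t - Φ 1) / (t - 1) := by
    intro t ht
    have hzz : z ^ t * z ^ (1 - t) = z := by
      rw [← Real.rpow_add hz0]
      norm_num
    have h1t : (1:ℝ) - t ≠ 0 := sub_ne_zero.mpr (Ne.symm ht)
    have ht1 : t - (1:ℝ) ≠ 0 := sub_ne_zero.mpr ht
    rw [qlog, if_neg ht]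
    simp only [hΦdef]
    rw [sub_self, Real.rpow_zero, Real.rpow_one]
    field_simp
    linear_combination (t - 1) * hzz
  have h1mem : (1:ℝ) ∈ Set.Ici (1/2:ℝ) := by norm_num
  have hrmem : r ∈ Set.Ici (1/2:ℝ) := hr
  have hsmem : s ∈ Set.Ici (1/2:ℝ) := le_of_lt (lt_of_le_of_lt hr hrs)
  have hq1 : qlog 1 z = Real.log z := if_pos rfl
  have hderiv1 : Real.log z * (z ^ (1:ℝ) + z ^ ((1:ℝ) - 1)) = Real.log z * (z + 1) := by
    rw [sub_self, Real.rpow_zero, Real.rpow_one]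
  rw [sub_neg]
  rcases eq_or_ne r 1 with hreq | hrne
  · subst hreq
    have hsne : s ≠ 1 := ne_of_gt hrs
    have := hΦconv.lt_slope_of_hasDerivAt h1mem hsmem hrs (hB 1)
    rw [slope_def_field] at this
    rw [key s hsne, hq1, Real.rpow_one, hderiv1] at *
    linarith [this]
  rcases eq_or_ne s 1 with hseq | hsne
  · subst hseq
    have := hΦconv.slope_lt_of_hasDerivAt hrmem h1mem hrs (hB 1)
    rw [slope_comm, slope_def_field] at this
    rw [key r hrne, hq1, Real.rpow_one, hderiv1] at *
    linarith [this]
  · have := hΦconv.secant_strict_mono h1mem hrmem hsmem hrne hsne hrs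
    rw [key r hrne, key s hsne]
    exact this
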